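/- Let (M, F) be a filtered module with an exhaustive increasing ℤ-indexed filtration F (F_p = 0 for p ≪ 0, ∪_p F_p = M), equipped with a second exhaustive increasing filtration V indexed by a discrete subset of ℝ, with V carrying induced F-filtrations. Suppose ∂ : M → M is an endomorphism with ∂(F_p V_α) ⊆ F_{p+1} V_{α+1} for all p, α, inducing surjections ∂ : F_p gr^V_α → F_{p+1} gr^V_{α+1} for all α ≥ −1, and suppose ∂ : gr^V_α M → gr^V_{α+1} M is bijective for all α > −1. Then for all β > α ≥ −1, the induced map ∂ : (V_β/V_α, F_*) → (V_{β+1}/V_{α+1}, F_{*+1}) is a filtered isomorphism, i.e., ∂ induces isomorphisms F_p(V_β/V_α) ≅ F_{p+1}(V_{β+1}/V_{α+1}) for all p. -/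

import Mathlib

/-- Lemma 0.1 of the paper, abstracted: let `M` carry an exhaustive increasing
`ℤ`-indexed filtration `F` with `F_p = 0` for `p ≪ 0`, and an exhaustive
increasing filtration `V` (indexed here by `ℤ`, enumerating the discrete index
set), with induced `F`-filtrations `F_p V_α = F_p ∩ V_α`.  Let `∂ : M → M` be
an endomorphism with `∂(F_p V_α) ⊆ F_{p+1} V_{α+1}`, inducing surjections
`∂ : F_p gr^V_α → F_{p+1} gr^V_{α+1}` for `α ≥ −1`, and such that
`∂ : gr^V_α M → gr^V_{α+1} M` is bijective for `α > −1`.  Then for all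
`β > α ≥ −1` and all `p`, the induced map
`F_p(V_β/V_α) → F_{p+1}(V_{β+1}/V_{α+1})` is bijective (a filtered
isomorphism `∂ : (V_β/V_α, F_*) ≅ (V_{β+1}/V_{α+1}, F_{*+1})`), stated
elementwise. -/
theorem filtered_iso_of_strict_specializability
    {R : Type*} [CommRing R] {M : Type*} [AddCommGroup M] [Module R M]
    (F : ℤ → Submodule R M) (hF : Monotone F)
    (hFbot : ∃ n₀ : ℤ, ∀ p ≤ n₀, F p = ⊥) (hFexh : ⨆ p, F p = ⊤)
    (V : ℤ → Submodule R M) (hV : Monotone V) (hVexh : ⨆ α, V α = ⊤)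
    (D : M →ₗ[R] M)
    -- ∂(F_p V_α) ⊆ F_{p+1} V_{α+1} :
    (hDF : ∀ (p α : ℤ), ∀ x ∈ F p ⊓ V α, D x ∈ F (p + 1) ⊓ V (α + 1))
    -- ∂ : F_p gr^V_α → F_{p+1} gr^V_{α+1} is surjective for α ≥ −1 :
    (hsurj : ∀ α ≥ (-1 : ℤ), ∀ p : ℤ, ∀ y ∈ F (p + 1) ⊓ V (α + 1),
      ∃ x ∈ F p ⊓ V α, y - D x ∈ V α)
    -- ∂ : gr^V_α M → gr^V_{α+1} M is injective for α > −1 :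
    (hinj : ∀ α > (-1 : ℤ), ∀ x ∈ V α, D x ∈ V α → x ∈ V (α - 1))
    -- ∂ : gr^V_α M → gr^V_{α+1} M is surjective for α > −1 :
    (hsurj' : ∀ α > (-1 : ℤ), ∀ y ∈ V (α + 1), ∃ x ∈ V α, y - D x ∈ V α) :
    ∀ (α β : ℤ), -1 ≤ α → α < β → ∀ p : ℤ,
      -- injectivity of ∂ : F_p(V_β/V_α) → F_{p+1}(V_{β+1}/V_{α+1}) :
      (∀ x ∈ F p ⊓ V β, D x ∈ V (α + 1) → x ∈ V α) ∧
      -- surjectivity of ∂ : F_p(V_β/V_α) → F_{p+1}(V_{β+1}/V_{α+1}) :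
      (∀ y ∈ F (p + 1) ⊓ V (β + 1), ∃ x ∈ F p ⊓ V β, y - D x ∈ V (α + 1)) := by
  intro α β hα hβ
  refine Int.le_induction (m := α + 1)
    (motive := fun γ _ => ∀ p : ℤ,
      (∀ x ∈ F p ⊓ V γ, D x ∈ V (α + 1) → x ∈ V α) ∧
      (∀ y ∈ F (p + 1) ⊓ V (γ + 1), ∃ x ∈ F p ⊓ V γ, y - D x ∈ V (α + 1)))
    ?_ ?_ β hβ
  · -- base case γ = α + 1
    intro p
    constructor
    · intro x hx hDx
      have h := hinj (α + 1) (by omega) x hx.2 hDx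
      simpa using h
    · intro y hy
      exact hsurj (α + 1) (by omega) p y hy
  · -- inductive step γ = β' + 1
    intro β' hβs IH p
    constructor
    · intro x hx hDx
      have hxβ : x ∈ V β' := by
        have := hinj (β' + 1) (by omega) x hx.2
          (hV (by omega : α + 1 ≤ β' + 1) hDx)
        simpa using this
      exact (IH p).1 x ⟨hx.1, hxβ⟩ hDx
    · intro y hy
      obtain ⟨x₁, hx₁, hr₁⟩ := hsurj (β' + 1) (by omega) p y hy
      have hy' : y - D x₁ ∈ F (p + 1) ⊓ V (β' + 1) :=
        ⟨sub_mem hy.1 (hDF p (β' + 1) x₁ hx₁).1, hr₁⟩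
      obtain ⟨x₂, hx₂, hr₂⟩ := (IH p).2 (y - D x₁) hy'
      refine ⟨x₁ + x₂, ⟨add_mem hx₁.1 hx₂.1,
        add_mem hx₁.2 (hV (by omega : β' ≤ β' + 1) hx₂.2)⟩, ?_⟩
      have heq : y - D (x₁ + x₂) = (y - D x₁) - D x₂ := by
        rw [map_add, sub_add_eq_sub_sub]
      rw [heq]; exact hr₂
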